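/- arXiv:2210.04391 — 4 statements merged into one kernel-verified Lean document; each statement's English description precedes it below -/
import Mathlib

section
/- Let p ∈ (1, 2], let H be a real inner product space, let x, y ∈ H, and let ε be a Rademacher random variable (P(ε = 1) = P(ε = −1) = 1/2). Then E‖x + ε y‖^p ≤ ‖x‖^p + ‖y‖^p. -/
open scoped NNReal

theorem rademacher_average_norm_rpow_le
    (p : ℝ) (hp1 : 1 < p) (hp2 : p ≤ 2)
    {H : Type*} [NormedAddCommGroup H] [InnerProductSpace ℝ H] (x y : H) :
    (‖x + y‖ ^ p + ‖x - y‖ ^ p) / 2 ≤ ‖x‖ ^ p + ‖y‖ ^ p := by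
  have hp0 : 0 < p := lt_trans one_pos hp1
  have key : ∀ a b c d : ℝ≥0, a ^ (2:ℝ) + b ^ (2:ℝ) = 2 * (c ^ (2:ℝ) + d ^ (2:ℝ)) →
      (a ^ p + b ^ p) / 2 ≤ c ^ p + d ^ p := by
    intro a b c d h
    have hq : 1 ≤ 2 / p := (one_le_div hp0).2 hp2
    have h2 := NNReal.rpow_arith_mean_le_arith_mean2_rpow (1/2) (1/2) (a ^ p) (b ^ p)
      (add_halves 1) hq
    have hpow : ∀ z : ℝ≥0, (z ^ p) ^ (2/p) = z ^ (2:ℝ) := fun z => by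
      rw [← NNReal.rpow_mul, mul_div_cancel₀ _ hp0.ne']
    rw [hpow a, hpow b] at h2
    have h3 := NNReal.rpow_le_rpow h2 (le_of_lt (by positivity : (0:ℝ) < p/2))
    rw [← NNReal.rpow_mul] at h3
    rw [show (2/p) * (p/2) = 1 by field_simp, NNReal.rpow_one] at h3
    have h4 : (1/2 : ℝ≥0) * a ^ (2:ℝ) + 1/2 * b ^ (2:ℝ) = c ^ (2:ℝ) + d ^ (2:ℝ) := by
      rw [← mul_add, h, ← mul_assoc]
      norm_num
    rw [h4] at h3
    have h5 : (c ^ (2:ℝ) + d ^ (2:ℝ)) ^ (p/2) ≤ c ^ p + d ^ p := by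
      have := NNReal.rpow_add_le_add_rpow (c ^ (2:ℝ)) (d ^ (2:ℝ))
        (le_of_lt (by positivity : (0:ℝ) < p/2)) (by rw [div_le_one (by norm_num : (0:ℝ) < 2)]; exact hp2)
      rwa [← NNReal.rpow_mul, ← NNReal.rpow_mul,
        show (2:ℝ) * (p/2) = p by ring] at this
    have heq : (a ^ p + b ^ p) / 2 = 1/2 * a ^ p + 1/2 * b ^ p := by
      rw [add_div, one_div, inv_mul_eq_div, inv_mul_eq_div]
    rw [heq]
    exact h3.trans h5
  have hpar := parallelogram_law_with_nnnorm ℝ x y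
  have := key ‖x + y‖₊ ‖x - y‖₊ ‖x‖₊ ‖y‖₊ (by
    rw [show (2:ℝ) = ((2:ℕ):ℝ) by norm_num]
    simp only [NNReal.rpow_natCast]
    rw [sq, sq, sq, sq]
    simpa only [sq] using hpar)
  have hcast := NNReal.coe_le_coe.2 this
  push_cast [NNReal.coe_rpow] at hcast
  simpa using hcast
end

section
/- Let p ∈ [1, 2] and let X₁, …, X_n be random vectors in a real separable Hilbert space H such that, with S_j = X₁ + ⋯ + X_j, for each j ∈ {2,…,n} the conditional distribution of X_j given S_{j−1} is symmetric and E‖X_j‖ < ∞. Then E‖S_n‖^p ≤ Σ_{j=1}^n E‖X_j‖^p. -/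
open MeasureTheory Finset
open scoped NNReal ENNReal

lemma nn_key (p : ℝ) (hp1 : 1 ≤ p) (hp2 : p ≤ 2)
    {H : Type*} [NormedAddCommGroup H] [InnerProductSpace ℝ H] (a b : H) :
    ‖a + b‖₊ ^ p + ‖a - b‖₊ ^ p ≤ 2 * (‖a‖₊ ^ p + ‖b‖₊ ^ p) := by
  set q : ℝ := p / 2 with hq
  have hq0 : 0 < q := by positivity
  have hq1 : q ≤ 1 := by rw [hq]; linarith
  have h2q : 2 * q = p := by rw [hq]; ring
  set u : ℝ≥0 := ‖a + b‖₊ ^ (2 : ℝ) with hu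
  set v : ℝ≥0 := ‖a - b‖₊ ^ (2 : ℝ) with hv
  set A : ℝ≥0 := ‖a‖₊ ^ (2 : ℝ) with hA
  set B : ℝ≥0 := ‖b‖₊ ^ (2 : ℝ) with hB
  have hpow : ∀ x : H, ‖x‖₊ ^ p = (‖x‖₊ ^ (2 : ℝ)) ^ q := by
    intro x; rw [← NNReal.rpow_mul, h2q]
  have hpar : u + v = 2 * (A + B) := by
    have := parallelogram_law_with_norm ℝ a b
    apply NNReal.coe_injective
    push_cast [hu, hv, hA, hB, NNReal.coe_rpow, coe_nnnorm]
    rw [Real.rpow_two, Real.rpow_two, Real.rpow_two, Real.rpow_two]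
    linarith [this]
  have h1q : (1 : ℝ) ≤ 1 / q := by
    rw [le_div_iff₀ hq0]; linarith
  have conv := NNReal.rpow_arith_mean_le_arith_mean2_rpow (1/2) (1/2) (u ^ q) (v ^ q)
    (NNReal.coe_injective (by push_cast; norm_num)) h1q
  have hcancel : ∀ x : ℝ≥0, (x ^ q) ^ (1 / q) = x := by
    intro x; rw [← NNReal.rpow_mul, mul_one_div, div_self hq0.ne', NNReal.rpow_one]
  have hcancel' : ∀ x : ℝ≥0, (x ^ (1 / q)) ^ q = x := by
    intro x; rw [← NNReal.rpow_mul, one_div_mul_cancel hq0.ne', NNReal.rpow_one]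
  rw [hcancel, hcancel] at conv
  have hw : ((1:ℝ≥0)/2) * u + ((1:ℝ≥0)/2) * v = A + B := by
    apply NNReal.coe_injective
    have := congrArg (fun x : ℝ≥0 => (x : ℝ)) hpar
    push_cast at this ⊢
    linarith
  rw [hw] at conv
  have conv2 : (((1:ℝ≥0)/2) * u ^ q + ((1:ℝ≥0)/2) * v ^ q) ≤ (A + B) ^ q := by
    have := NNReal.rpow_le_rpow conv hq0.le
    rwa [hcancel'] at this
  have conv3 : u ^ q + v ^ q ≤ 2 * (A + B) ^ q := by
    have h2 : (2:ℝ≥0) * (((1:ℝ≥0)/2) * u ^ q + ((1:ℝ≥0)/2) * v ^ q) = u ^ q + v ^ q := by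
      apply NNReal.coe_injective; push_cast; ring
    calc u ^ q + v ^ q = 2 * (((1:ℝ≥0)/2) * u ^ q + ((1:ℝ≥0)/2) * v ^ q) := h2.symm
      _ ≤ 2 * (A + B) ^ q := by exact mul_le_mul_right conv2 2
  have sub : (A + B) ^ q ≤ A ^ q + B ^ q := NNReal.rpow_add_le_add_rpow A B hq0.le hq1
  calc ‖a + b‖₊ ^ p + ‖a - b‖₊ ^ p = u ^ q + v ^ q := by rw [hpow, hpow]
    _ ≤ 2 * (A + B) ^ q := conv3
    _ ≤ 2 * (A ^ q + B ^ q) := by exact mul_le_mul_right sub 2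
    _ = 2 * (‖a‖₊ ^ p + ‖b‖₊ ^ p) := by rw [hpow, hpow]

lemma real_key (p : ℝ) (hp1 : 1 ≤ p) (hp2 : p ≤ 2)
    {H : Type*} [NormedAddCommGroup H] [InnerProductSpace ℝ H] (a b : H) :
    ‖a + b‖ ^ p + ‖a - b‖ ^ p ≤ 2 * (‖a‖ ^ p + ‖b‖ ^ p) := by
  have := nn_key p hp1 hp2 a b
  have h := NNReal.coe_le_coe.mpr this
  push_cast [NNReal.coe_rpow, coe_nnnorm] at h
  exact h

theorem conditionally_symmetric_sum_moment_le
    (p : ℝ) (hp1 : 1 ≤ p) (hp2 : p ≤ 2)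
    {H : Type*} [NormedAddCommGroup H] [InnerProductSpace ℝ H]
    [CompleteSpace H] [SecondCountableTopology H] [MeasurableSpace H] [BorelSpace H]
    {Ω : Type*} [MeasurableSpace Ω] (P : Measure Ω) [IsProbabilityMeasure P]
    (n : ℕ) (X : ℕ → Ω → H) (hX : ∀ j, Measurable (X j))
    (S : ℕ → Ω → H) (hS : ∀ m, S m = fun ω => ∑ i ∈ Finset.Icc 1 m, X i ω)
    (hint : ∀ j ∈ Finset.Icc 2 n, Integrable (fun ω => ‖X j ω‖) P)
    (hsymm : ∀ j ∈ Finset.Icc 2 n,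
      Measure.map (fun ω => (S (j - 1) ω, X j ω)) P
        = Measure.map (fun ω => (S (j - 1) ω, -X j ω)) P) :
    ∫⁻ ω, ENNReal.ofReal (‖S n ω‖ ^ p) ∂P
      ≤ ∑ j ∈ Finset.Icc 1 n, ∫⁻ ω, ENNReal.ofReal (‖X j ω‖ ^ p) ∂P := by
  have hp0 : (0:ℝ) < p := lt_of_lt_of_le one_pos hp1
  have hSmeas : ∀ m, Measurable (S m) := by
    intro m; rw [hS m]; exact Finset.measurable_sum _ fun i _ => hX i
  have hconv : ∀ x : H, ENNReal.ofReal (‖x‖ ^ p) = (‖x‖₊ : ℝ≥0∞) ^ p := by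
    intro x
    rw [← enorm_eq_nnnorm, ← ofReal_norm, ← ENNReal.ofReal_rpow_of_nonneg (norm_nonneg x) hp0.le]
  have hmeasF : ∀ (f : Ω → H), Measurable f →
      Measurable (fun ω => ENNReal.ofReal (‖f ω‖ ^ p)) := by
    intro f hf
    simp_rw [hconv]
    exact hf.nnnorm.coe_nnreal_ennreal.pow_const p
  -- main claim by induction
  suffices claim : ∀ m, m ≤ n →
      ∫⁻ ω, ENNReal.ofReal (‖S m ω‖ ^ p) ∂P
        ≤ ∑ j ∈ Finset.Icc 1 m, ∫⁻ ω, ENNReal.ofReal (‖X j ω‖ ^ p) ∂P by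
    exact claim n le_rfl
  intro m
  induction m with
  | zero =>
    intro _
    have : S 0 = fun _ => 0 := by rw [hS 0]; simp
    simp [this, Real.zero_rpow hp0.ne']
  | succ m ih =>
    intro hmn
    have hm : m ≤ n := Nat.le_of_succ_le hmn
    have hstep : S (m + 1) = fun ω => S m ω + X (m + 1) ω := by
      rw [hS (m+1), hS m]
      funext ω
      rw [← Finset.sum_Icc_succ_top (Nat.le_add_left 1 m)]
    rcases Nat.eq_zero_or_pos m with rfl | hm1
    · -- m = 0 : S 1 = X 1
      have h0 : S 0 = fun _ => 0 := by rw [hS 0]; simp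
      rw [hstep, h0]
      simp
    · -- m ≥ 1, j = m+1 ∈ Icc 2 n
      have hj : m + 1 ∈ Finset.Icc 2 n := by
        simp only [Finset.mem_Icc]; omega
      have hsym := hsymm (m+1) hj
      rw [Nat.add_sub_cancel] at hsym
      -- flip lemma
      set g : H × H → ℝ≥0∞ := fun z => ENNReal.ofReal (‖z.1 + z.2‖ ^ p) with hg
      have hgmeas : Measurable g := by
        have : g = fun z : H × H => ((‖z.1 + z.2‖₊ : ℝ≥0∞)) ^ p := by
          funext z; exact hconv _
        rw [this]
        exact (measurable_fst.add measurable_snd).nnnorm.coe_nnreal_ennreal.pow_const p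
      have hpair : Measurable (fun ω => (S m ω, X (m+1) ω)) :=
        (hSmeas m).prodMk (hX (m+1))
      have hpair' : Measurable (fun ω => (S m ω, -X (m+1) ω)) :=
        (hSmeas m).prodMk (hX (m+1)).neg
      have hflip : ∫⁻ ω, ENNReal.ofReal (‖S m ω + X (m+1) ω‖ ^ p) ∂P
          = ∫⁻ ω, ENNReal.ofReal (‖S m ω - X (m+1) ω‖ ^ p) ∂P := by
        have e1 : ∫⁻ ω, ENNReal.ofReal (‖S m ω + X (m+1) ω‖ ^ p) ∂P
            = ∫⁻ z, g z ∂(Measure.map (fun ω => (S m ω, X (m+1) ω)) P) := by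
          rw [lintegral_map hgmeas hpair]
        have e2 : ∫⁻ z, g z ∂(Measure.map (fun ω => (S m ω, -X (m+1) ω)) P)
            = ∫⁻ ω, ENNReal.ofReal (‖S m ω - X (m+1) ω‖ ^ p) ∂P := by
          rw [lintegral_map hgmeas hpair']
          simp only [hg, ← sub_eq_add_neg]
        rw [e1, hsym, e2]
      have hkey : (2:ℝ≥0∞) * ∫⁻ ω, ENNReal.ofReal (‖S (m+1) ω‖ ^ p) ∂P
          ≤ 2 * ((∫⁻ ω, ENNReal.ofReal (‖S m ω‖ ^ p) ∂P)
              + ∫⁻ ω, ENNReal.ofReal (‖X (m+1) ω‖ ^ p) ∂P) := by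
        have lhs_eq : (2:ℝ≥0∞) * ∫⁻ ω, ENNReal.ofReal (‖S (m+1) ω‖ ^ p) ∂P
            = ∫⁻ ω, (ENNReal.ofReal (‖S m ω + X (m+1) ω‖ ^ p)
                + ENNReal.ofReal (‖S m ω - X (m+1) ω‖ ^ p)) ∂P := by
          rw [lintegral_add_left (hmeasF (fun ω => S m ω + X (m+1) ω) ((hSmeas m).add (hX (m+1)))), ← hflip, two_mul]
          congr 1 <;> · rw [hstep]
        rw [lhs_eq]
        have rhs_eq : (2:ℝ≥0∞) * ((∫⁻ ω, ENNReal.ofReal (‖S m ω‖ ^ p) ∂P)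
              + ∫⁻ ω, ENNReal.ofReal (‖X (m+1) ω‖ ^ p) ∂P)
            = ∫⁻ ω, ENNReal.ofReal (2 * (‖S m ω‖ ^ p + ‖X (m+1) ω‖ ^ p)) ∂P := by
          rw [← lintegral_add_left (hmeasF _ (hSmeas m)) ]
          rw [← lintegral_const_mul 2 (by
            exact (hmeasF _ (hSmeas m)).add (hmeasF _ (hX (m+1))))]
          congr 1; funext ω
          rw [ENNReal.ofReal_mul (by norm_num), ENNReal.ofReal_add (by positivity) (by positivity)]
          norm_num
        rw [rhs_eq]
        apply lintegral_mono
        intro ω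
        dsimp only
        rw [← ENNReal.ofReal_add (by positivity) (by positivity)]
        exact ENNReal.ofReal_le_ofReal (real_key p hp1 hp2 _ _)
      have hmain : ∫⁻ ω, ENNReal.ofReal (‖S (m+1) ω‖ ^ p) ∂P
          ≤ (∫⁻ ω, ENNReal.ofReal (‖S m ω‖ ^ p) ∂P)
              + ∫⁻ ω, ENNReal.ofReal (‖X (m+1) ω‖ ^ p) ∂P :=
        (ENNReal.mul_le_mul_iff_right (two_ne_zero) ENNReal.ofNat_ne_top).mp hkey
      calc ∫⁻ ω, ENNReal.ofReal (‖S (m+1) ω‖ ^ p) ∂P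
          ≤ (∫⁻ ω, ENNReal.ofReal (‖S m ω‖ ^ p) ∂P)
              + ∫⁻ ω, ENNReal.ofReal (‖X (m+1) ω‖ ^ p) ∂P := hmain
        _ ≤ (∑ j ∈ Finset.Icc 1 m, ∫⁻ ω, ENNReal.ofReal (‖X j ω‖ ^ p) ∂P)
              + ∫⁻ ω, ENNReal.ofReal (‖X (m+1) ω‖ ^ p) ∂P := add_le_add_left (ih hm) _
        _ = ∑ j ∈ Finset.Icc 1 (m+1), ∫⁻ ω, ENNReal.ofReal (‖X j ω‖ ^ p) ∂P := by
            rw [Finset.sum_Icc_succ_top (Nat.le_add_left 1 m)]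
end

section
/- Let p ∈ [1, 2) and let X₁, …, X_n be symmetric real-valued random variables that are pairwise independent. Then E|X₁ + ⋯ + X_n|^p ≤ (2/(2−p)) Σ_{j=1}^n E|X_j|^p. -/
open MeasureTheory ProbabilityTheory Finset

namespace PISum

open Set
open scoped ENNReal

noncomputable def trunc (t : ℝ) (x : ℝ) : ℝ := if |x| ≤ t then x else 0

lemma trunc_meas (t : ℝ) : Measurable (trunc t) := by
  unfold trunc
  exact Measurable.ite (measurableSet_le measurable_abs measurable_const) measurable_id
    measurable_const

lemma trunc_odd (t x : ℝ) : trunc t (-x) = - trunc t x := by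
  unfold trunc; rw [abs_neg]; split <;> simp

lemma abs_trunc_le (t x : ℝ) : |trunc t x| ≤ |t| := by
  unfold trunc; split
  · exact le_trans (by assumption) (le_abs_self t)
  · simpa using abs_nonneg t

variable {Ω : Type*} [MeasurableSpace Ω] {P : Measure Ω} [IsProbabilityMeasure P]

lemma trunc_integrable {X : Ω → ℝ} (hX : Measurable X) (t : ℝ) :
    Integrable (fun ω => trunc t (X ω)) P := by
  refine ⟨((trunc_meas t).comp hX).aestronglyMeasurable, ?_⟩
  exact HasFiniteIntegral.of_bounded (C := |t|)
    (Filter.Eventually.of_forall fun ω => by simpa [Real.norm_eq_abs] using abs_trunc_le t (X ω))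

lemma integral_trunc_zero {X : Ω → ℝ} (hX : Measurable X)
    (hsymm : Measure.map X P = Measure.map (fun ω => -X ω) P) (t : ℝ) :
    ∫ ω, trunc t (X ω) ∂P = 0 := by
  have h1 : ∫ ω, trunc t (X ω) ∂P = ∫ x, trunc t x ∂(Measure.map X P) :=
    (integral_map hX.aemeasurable (trunc_meas t).aestronglyMeasurable).symm
  have h2 : ∫ x, trunc t x ∂(Measure.map (fun ω => -X ω) P) = ∫ ω, trunc t (-X ω) ∂P :=
    integral_map hX.neg.aemeasurable (trunc_meas t).aestronglyMeasurable
  have h3 : ∫ ω, trunc t (-X ω) ∂P = - ∫ ω, trunc t (X ω) ∂P := by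
    simp_rw [trunc_odd]; exact integral_neg _
  rw [h1, hsymm, h2, h3] at *
  linarith [h1]

lemma integral_sq_sum {n : ℕ} {X : Fin n → Ω → ℝ} (hX : ∀ j, Measurable (X j))
    (hsymm : ∀ j, Measure.map (X j) P = Measure.map (fun ω => -X j ω) P)
    (hindep : ∀ i j, i ≠ j → IndepFun (X i) (X j) P) (t : ℝ) :
    ∫ ω, (∑ j, trunc t (X j ω))^2 ∂P = ∑ j, ∫ ω, (trunc t (X j ω))^2 ∂P := by
  have hint : ∀ i j : Fin n, Integrable (fun ω => trunc t (X i ω) * trunc t (X j ω)) P := by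
    intro i j
    refine (trunc_integrable (hX j) t).bdd_mul (c := |t|)
      ((trunc_meas t).comp (hX i)).aestronglyMeasurable (Filter.Eventually.of_forall fun ω => ?_)
    simpa [Real.norm_eq_abs] using abs_trunc_le t (X i ω)
  have expand : ∀ ω, (∑ j, trunc t (X j ω))^2
      = ∑ i, ∑ j, trunc t (X i ω) * trunc t (X j ω) := by
    intro ω; rw [sq, Finset.sum_mul_sum]
  simp_rw [expand]
  rw [integral_finset_sum _ fun i _ => integrable_finset_sum _ fun j _ => hint i j]
  refine Finset.sum_congr rfl fun i _ => ?_
  rw [integral_finset_sum _ fun j _ => hint i j, Finset.sum_eq_single i]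
  · simp_rw [← sq]
  · intro j _ hji
    have hij : IndepFun (fun ω => trunc t (X i ω)) (fun ω => trunc t (X j ω)) P :=
      (hindep i j (Ne.symm hji)).comp (trunc_meas t) (trunc_meas t)
    rw [hij.integral_fun_mul_eq_mul_integral ((trunc_meas t).comp (hX i)).aestronglyMeasurable
        ((trunc_meas t).comp (hX j)).aestronglyMeasurable,
      integral_trunc_zero (hX i) (hsymm i) t, zero_mul]
  · simp

lemma sq_trunc_integrable {X : Ω → ℝ} (hX : Measurable X) (t : ℝ) :
    Integrable (fun ω => (trunc t (X ω))^2) P := by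
  refine ⟨(((trunc_meas t).comp hX).pow_const 2).aestronglyMeasurable, ?_⟩
  refine HasFiniteIntegral.of_bounded (C := |t|^2) (Filter.Eventually.of_forall fun ω => ?_)
  rw [Real.norm_eq_abs, abs_pow]
  exact pow_le_pow_left₀ (abs_nonneg _) (abs_trunc_le t (X ω)) 2

lemma tail_bound {n : ℕ} {X : Fin n → Ω → ℝ} (hX : ∀ j, Measurable (X j))
    (hsymm : ∀ j, Measure.map (X j) P = Measure.map (fun ω => -X j ω) P)
    (hindep : ∀ i j, i ≠ j → IndepFun (X i) (X j) P) {t : ℝ} (ht : 0 < t) :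
    P {ω | t < |∑ j, X j ω|} ≤ (∑ j, P {ω | t < |X j ω|})
      + (ENNReal.ofReal (t^2))⁻¹ *
          ∑ j, ∫⁻ ω, ENNReal.ofReal ((trunc t (X j ω))^2) ∂P := by
  set T : Ω → ℝ := fun ω => ∑ j, trunc t (X j ω) with hT
  have hTmeas : Measurable T := Finset.measurable_sum _ fun j _ => (trunc_meas t).comp (hX j)
  have hincl : {ω | t < |∑ j, X j ω|} ⊆ (⋃ j, {ω | t < |X j ω|}) ∪ {ω | t < |T ω|} := by
    intro ω hω
    by_cases h : ∃ j, t < |X j ω|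
    · exact Or.inl (Set.mem_iUnion.2 ⟨h.choose, h.choose_spec⟩)
    · push_neg at h
      refine Or.inr ?_
      have : T ω = ∑ j, X j ω := by
        refine Finset.sum_congr rfl fun j _ => ?_
        simp only [trunc, if_pos (h j)]
      simpa [Set.mem_setOf_eq, this] using hω
  have hTint : Integrable (fun ω => (T ω)^2) P := by
    refine ⟨(hTmeas.pow_const 2).aestronglyMeasurable, ?_⟩
    refine HasFiniteIntegral.of_bounded (C := (n * |t|)^2) (Filter.Eventually.of_forall fun ω => ?_)
    rw [Real.norm_eq_abs, abs_pow]
    refine pow_le_pow_left₀ (abs_nonneg _) ?_ 2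
    calc |T ω| ≤ ∑ j, |trunc t (X j ω)| := Finset.abs_sum_le_sum_abs _ _
      _ ≤ ∑ _j : Fin n, |t| := Finset.sum_le_sum fun j _ => abs_trunc_le t (X j ω)
      _ = n * |t| := by simp [mul_comm]
  have cheb : P {ω | t < |T ω|} ≤
      (ENNReal.ofReal (t^2))⁻¹ * ∫⁻ ω, ENNReal.ofReal ((T ω)^2) ∂P := by
    have hmono : {ω | t < |T ω|} ⊆
        {ω | ENNReal.ofReal (t^2) ≤ ENNReal.ofReal ((T ω)^2)} := by
      intro ω hω
      refine ENNReal.ofReal_le_ofReal ?_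
      calc t^2 ≤ |T ω|^2 := pow_le_pow_left₀ ht.le (le_of_lt hω) 2
        _ = (T ω)^2 := sq_abs _
    have key := mul_meas_ge_le_lintegral₀ (μ := P)
      (f := fun ω => ENNReal.ofReal ((T ω)^2))
      ((hTmeas.pow_const 2).ennreal_ofReal.aemeasurable) (ENNReal.ofReal (t^2))
    have h1 : ENNReal.ofReal (t^2) * P {ω | t < |T ω|}
        ≤ ∫⁻ ω, ENNReal.ofReal ((T ω)^2) ∂P :=
      le_trans (mul_le_mul_right (measure_mono hmono) _) key
    have ht2 : (0:ℝ) < t^2 := by positivity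
    rw [← ENNReal.div_eq_inv_mul, ENNReal.le_div_iff_mul_le
      (Or.inl ((ENNReal.ofReal_pos.mpr ht2).ne')) (Or.inl ENNReal.ofReal_ne_top), mul_comm]
    exact h1
  have hsum : ∫⁻ ω, ENNReal.ofReal ((T ω)^2) ∂P
      = ∑ j, ∫⁻ ω, ENNReal.ofReal ((trunc t (X j ω))^2) ∂P := by
    rw [← ofReal_integral_eq_lintegral_ofReal hTint
        (Filter.Eventually.of_forall fun ω => sq_nonneg _)]
    rw [hT]
    simp only
    rw [integral_sq_sum hX hsymm hindep t]
    rw [ENNReal.ofReal_sum_of_nonneg fun j _ => integral_nonneg fun ω => sq_nonneg _]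
    exact Finset.sum_congr rfl fun j _ => ofReal_integral_eq_lintegral_ofReal
      (sq_trunc_integrable (hX j) t) (Filter.Eventually.of_forall fun ω => sq_nonneg _)
  calc P {ω | t < |∑ j, X j ω|}
      ≤ P ((⋃ j, {ω | t < |X j ω|}) ∪ {ω | t < |T ω|}) := measure_mono hincl
    _ ≤ P (⋃ j, {ω | t < |X j ω|}) + P {ω | t < |T ω|} := measure_union_le _ _
    _ ≤ (∑ j, P {ω | t < |X j ω|}) + P {ω | t < |T ω|} := by
        gcongr
        calc P (⋃ j, {ω | t < |X j ω|}) ≤ ∑' j, P {ω | t < |X j ω|} := measure_iUnion_le _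
          _ = ∑ j, P {ω | t < |X j ω|} := tsum_fintype _
    _ ≤ (∑ j, P {ω | t < |X j ω|}) + (ENNReal.ofReal (t^2))⁻¹ *
          ∑ j, ∫⁻ ω, ENNReal.ofReal ((trunc t (X j ω))^2) ∂P := by
        rw [← hsum]; gcongr

lemma inner_int {p : ℝ} (hp1 : 1 ≤ p) (hp2 : p < 2) (x : ℝ) :
    ∫⁻ t in Ioi (0:ℝ),
        (if |x| ≤ t then ENNReal.ofReal (t^(p-3)) * ENNReal.ofReal (x^2) else 0)
      = ENNReal.ofReal (|x|^p * (2-p)⁻¹) := by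
  have hp0 : 0 < p := lt_of_lt_of_le one_pos hp1
  rcases eq_or_ne x 0 with rfl | hx
  · simp [Real.zero_rpow hp0.ne']
  · set a := |x| with ha
    have hapos : 0 < a := abs_pos.mpr hx
    have hlt : p - 3 < -1 := by linarith
    have hind : ∀ t : ℝ, (if |x| ≤ t then ENNReal.ofReal (t^(p-3)) * ENNReal.ofReal (x^2) else 0)
        = (Ici a).indicator (fun t => ENNReal.ofReal (t^(p-3)) * ENNReal.ofReal (x^2)) t := by
      intro t
      rw [Set.indicator_apply]
      simp only [Set.mem_Ici, ← ha]
    rw [← ha] at hind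
    simp_rw [hind]
    have hm : Measurable fun t : ℝ => ENNReal.ofReal (t ^ (p-3)) :=
      (measurable_id.pow measurable_const).ennreal_ofReal
    have hIa : Set.Ici a ∩ Set.Ioi 0 = Set.Ici a :=
      Set.inter_eq_left.mpr (fun t (ht : a ≤ t) => lt_of_lt_of_le hapos ht)
    rw [lintegral_indicator measurableSet_Ici _, Measure.restrict_restrict measurableSet_Ici,
      hIa, ← MeasureTheory.restrict_Ioi_eq_restrict_Ici,
      lintegral_mul_const _ hm]
    have hnn : 0 ≤ᵐ[volume.restrict (Ioi a)] fun t : ℝ => t ^ (p-3) := by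
      filter_upwards [self_mem_ae_restrict measurableSet_Ioi] with t ht
      exact Real.rpow_nonneg (le_of_lt (lt_trans hapos ht)) _
    rw [← ofReal_integral_eq_lintegral_ofReal (integrableOn_Ioi_rpow_of_lt hlt hapos) hnn,
      integral_Ioi_rpow_of_lt hlt hapos, ← ENNReal.ofReal_mul (by
        rw [neg_div]
        have : a ^ (p - 3 + 1) / (p - 3 + 1) ≤ 0 := by
          apply div_nonpos_of_nonneg_of_nonpos (Real.rpow_nonneg hapos.le _) (by linarith)
        linarith)]
    congr 1
    have hane : a ^ (p - 3 + 1) * a ^ (2:ℝ) = a ^ p := by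
      rw [← Real.rpow_add hapos]; ring_nf
    have ha2 : x^2 = a ^ (2:ℝ) := by
      rw [← sq_abs, ← ha, ← Real.rpow_natCast a 2]; norm_num
    rw [ha2]
    have h2p : p - 3 + 1 ≠ 0 := by intro h; linarith [hp2]
    show -a ^ (p - 3 + 1) / (p - 3 + 1) * a ^ (2:ℝ) = a ^ p * (2 - p)⁻¹
    rw [neg_div, neg_mul, div_mul_eq_mul_div, hane, div_eq_mul_inv]
    rw [show (p - 3 + 1)⁻¹ = -(2 - p)⁻¹ by rw [show p - 3 + 1 = -(2 - p) by ring, inv_neg]]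
    ring

lemma fubini_piece {p : ℝ} (hp1 : 1 ≤ p) (hp2 : p < 2) {X : Ω → ℝ} (hX : Measurable X) :
    ∫⁻ t in Ioi (0:ℝ), (ENNReal.ofReal (t^2))⁻¹ *
        (∫⁻ ω, ENNReal.ofReal ((trunc t (X ω))^2) ∂P) * ENNReal.ofReal (t^(p-1))
      = ENNReal.ofReal ((2-p)⁻¹) * ∫⁻ ω, ENNReal.ofReal (|X ω|^p) ∂P := by
  set F : ℝ → Ω → ℝ≥0∞ := fun t ω =>
    if |X ω| ≤ t then ENNReal.ofReal (t^(p-3)) * ENNReal.ofReal ((X ω)^2) else 0 with hF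
  have hFmeas : Measurable fun q : ℝ × Ω => F q.1 q.2 := by
    refine Measurable.ite (measurableSet_le (hX.comp measurable_snd).abs measurable_fst) ?_
      measurable_const
    exact ((measurable_fst.pow measurable_const).ennreal_ofReal).mul
      (((hX.comp measurable_snd).pow_const 2).ennreal_ofReal)
  have step1 : ∫⁻ t in Ioi (0:ℝ), (ENNReal.ofReal (t^2))⁻¹ *
        (∫⁻ ω, ENNReal.ofReal ((trunc t (X ω))^2) ∂P) * ENNReal.ofReal (t^(p-1))
      = ∫⁻ t in Ioi (0:ℝ), ∫⁻ ω, F t ω ∂P := by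
    refine lintegral_congr_ae ?_
    filter_upwards [self_mem_ae_restrict measurableSet_Ioi] with t (ht : 0 < t)
    have h0 : ENNReal.ofReal (t^2) ≠ 0 := (ENNReal.ofReal_pos.mpr (by positivity)).ne'
    have htop : ENNReal.ofReal (t^2) ≠ ⊤ := ENNReal.ofReal_ne_top
    have hw : ENNReal.ofReal (t^(p-1))
        = ENNReal.ofReal (t^(p-3)) * ENNReal.ofReal (t^2) := by
      rw [← ENNReal.ofReal_mul (Real.rpow_nonneg ht.le _)]
      congr 1
      rw [← Real.rpow_natCast t 2, ← Real.rpow_add ht]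
      congr 1
      push_cast
      ring
    rw [hw]
    have hc : ∀ L : ℝ≥0∞, (ENNReal.ofReal (t^2))⁻¹ * L *
        (ENNReal.ofReal (t^(p-3)) * ENNReal.ofReal (t^2))
        = ENNReal.ofReal (t^(p-3)) * L := by
      intro L
      calc (ENNReal.ofReal (t^2))⁻¹ * L * (ENNReal.ofReal (t^(p-3)) * ENNReal.ofReal (t^2))
          = ENNReal.ofReal (t^(p-3)) * L *
            ((ENNReal.ofReal (t^2))⁻¹ * ENNReal.ofReal (t^2)) := by ring
        _ = ENNReal.ofReal (t^(p-3)) * L := by rw [ENNReal.inv_mul_cancel h0 htop, mul_one]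
    rw [hc]
    have hmg : Measurable fun ω => ENNReal.ofReal ((trunc t (X ω))^2) :=
      (((trunc_meas t).comp hX).pow_const 2).ennreal_ofReal
    rw [← lintegral_const_mul _ hmg]
    refine lintegral_congr fun ω => ?_
    simp only [hF, trunc]
    split_ifs with h
    · rfl
    · simp
  rw [step1, lintegral_lintegral_swap hFmeas.aemeasurable]
  have step2 : ∀ ω, ∫⁻ t in Ioi (0:ℝ), F t ω = ENNReal.ofReal (|X ω|^p * (2-p)⁻¹) :=
    fun ω => inner_int hp1 hp2 (X ω)
  simp_rw [step2]
  have : ∀ ω, ENNReal.ofReal (|X ω|^p * (2-p)⁻¹)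
      = ENNReal.ofReal (|X ω|^p) * ENNReal.ofReal ((2-p)⁻¹) := fun ω =>
    ENNReal.ofReal_mul (Real.rpow_nonneg (abs_nonneg _) _)
  simp_rw [this]
  rw [lintegral_mul_const _ ((hX.abs.pow measurable_const).ennreal_ofReal), mul_comm]

end PISum

open PISum Set

theorem pairwise_indep_symmetric_sum_moment_le
    (p : ℝ) (hp1 : 1 ≤ p) (hp2 : p < 2)
    {Ω : Type*} [MeasurableSpace Ω] (P : Measure Ω) [IsProbabilityMeasure P]
    (n : ℕ) (X : Fin n → Ω → ℝ) (hX : ∀ j, Measurable (X j))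
    (hsymm : ∀ j, Measure.map (X j) P = Measure.map (fun ω => -X j ω) P)
    (hindep : ∀ i j, i ≠ j → IndepFun (X i) (X j) P) :
    ∫⁻ ω, ENNReal.ofReal (|∑ j, X j ω| ^ p) ∂P
      ≤ ENNReal.ofReal (2 / (2 - p)) *
          ∑ j, ∫⁻ ω, ENNReal.ofReal (|X j ω| ^ p) ∂P := by
  have hp0 : 0 < p := lt_of_lt_of_le one_pos hp1
  have h2p : (0:ℝ) < 2 - p := by linarith
  have hSmeas : Measurable fun ω => ∑ j, X j ω := Finset.measurable_sum _ fun j _ => hX j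
  have lcS : ∫⁻ ω, ENNReal.ofReal (|∑ j, X j ω| ^ p) ∂P
      = ENNReal.ofReal p * ∫⁻ t in Set.Ioi 0,
          P {ω | t < |∑ j, X j ω|} * ENNReal.ofReal (t ^ (p-1)) :=
    lintegral_rpow_eq_lintegral_meas_lt_mul P
      (Filter.Eventually.of_forall fun ω => abs_nonneg _) hSmeas.abs.aemeasurable hp0
  have lcX : ∀ j, ∫⁻ ω, ENNReal.ofReal (|X j ω| ^ p) ∂P
      = ENNReal.ofReal p * ∫⁻ t in Set.Ioi 0,
          P {ω | t < |X j ω|} * ENNReal.ofReal (t ^ (p-1)) := fun j =>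
    lintegral_rpow_eq_lintegral_meas_lt_mul P
      (Filter.Eventually.of_forall fun ω => abs_nonneg _) (hX j).abs.aemeasurable hp0
  have wmeas : Measurable fun t : ℝ => ENNReal.ofReal (t ^ (p-1)) :=
    (measurable_id.pow measurable_const).ennreal_ofReal
  have m1 : ∀ j : Fin n, Measurable fun t : ℝ => P {ω | t < |X j ω|} := by
    intro j
    apply Antitone.measurable
    intro s t hst
    exact measure_mono fun ω (hω : t < |X j ω|) => lt_of_le_of_lt hst hω
  have m2 : ∀ j : Fin n, Measurable fun t : ℝ =>
      ∫⁻ ω, ENNReal.ofReal ((trunc t (X j ω))^2) ∂P := by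
    intro j
    apply Monotone.measurable
    intro s t hst
    refine lintegral_mono fun ω => ENNReal.ofReal_le_ofReal ?_
    unfold PISum.trunc
    rcases le_or_gt |X j ω| s with h | h
    · rw [if_pos h, if_pos (le_trans h hst)]
    · rw [if_neg (not_le.mpr h)]
      simpa using sq_nonneg (if |X j ω| ≤ t then X j ω else 0)
  have minv : Measurable fun t : ℝ => (ENNReal.ofReal (t^2))⁻¹ :=
    ((measurable_id.pow_const 2).ennreal_ofReal).inv
  have key : ∫⁻ t in Set.Ioi 0, P {ω | t < |∑ j, X j ω|} * ENNReal.ofReal (t^(p-1))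
      ≤ (∑ j, ∫⁻ t in Set.Ioi 0, P {ω | t < |X j ω|} * ENNReal.ofReal (t^(p-1)))
        + ∑ j, ∫⁻ t in Set.Ioi 0, (ENNReal.ofReal (t^2))⁻¹ *
            (∫⁻ ω, ENNReal.ofReal ((trunc t (X j ω))^2) ∂P) * ENNReal.ofReal (t^(p-1)) := by
    have pt : ∀ᵐ t ∂(volume.restrict (Set.Ioi (0:ℝ))),
        P {ω | t < |∑ j, X j ω|} * ENNReal.ofReal (t^(p-1))
        ≤ (∑ j, P {ω | t < |X j ω|} * ENNReal.ofReal (t^(p-1)))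
          + ∑ j, (ENNReal.ofReal (t^2))⁻¹ *
              (∫⁻ ω, ENNReal.ofReal ((trunc t (X j ω))^2) ∂P) * ENNReal.ofReal (t^(p-1)) := by
      filter_upwards [self_mem_ae_restrict measurableSet_Ioi] with t (ht : 0 < t)
      calc P {ω | t < |∑ j, X j ω|} * ENNReal.ofReal (t^(p-1))
          ≤ ((∑ j, P {ω | t < |X j ω|}) + (ENNReal.ofReal (t^2))⁻¹ *
              ∑ j, ∫⁻ ω, ENNReal.ofReal ((trunc t (X j ω))^2) ∂P) * ENNReal.ofReal (t^(p-1)) :=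
            mul_le_mul_left (tail_bound hX hsymm hindep ht) _
        _ = (∑ j, P {ω | t < |X j ω|} * ENNReal.ofReal (t^(p-1)))
            + ∑ j, (ENNReal.ofReal (t^2))⁻¹ *
                (∫⁻ ω, ENNReal.ofReal ((trunc t (X j ω))^2) ∂P) * ENNReal.ofReal (t^(p-1)) := by
            rw [add_mul, Finset.sum_mul, Finset.mul_sum, Finset.sum_mul]
    calc ∫⁻ t in Set.Ioi 0, P {ω | t < |∑ j, X j ω|} * ENNReal.ofReal (t^(p-1))
        ≤ ∫⁻ t in Set.Ioi 0, ((∑ j, P {ω | t < |X j ω|} * ENNReal.ofReal (t^(p-1)))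
            + ∑ j, (ENNReal.ofReal (t^2))⁻¹ *
                (∫⁻ ω, ENNReal.ofReal ((trunc t (X j ω))^2) ∂P) * ENNReal.ofReal (t^(p-1))) :=
          lintegral_mono_ae pt
      _ = (∫⁻ t in Set.Ioi 0, ∑ j, P {ω | t < |X j ω|} * ENNReal.ofReal (t^(p-1)))
          + ∫⁻ t in Set.Ioi 0, ∑ j, (ENNReal.ofReal (t^2))⁻¹ *
              (∫⁻ ω, ENNReal.ofReal ((trunc t (X j ω))^2) ∂P) * ENNReal.ofReal (t^(p-1)) :=
          lintegral_add_left (Finset.measurable_sum _ fun j _ => (m1 j).mul wmeas) _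
      _ = (∑ j, ∫⁻ t in Set.Ioi 0, P {ω | t < |X j ω|} * ENNReal.ofReal (t^(p-1)))
          + ∑ j, ∫⁻ t in Set.Ioi 0, (ENNReal.ofReal (t^2))⁻¹ *
              (∫⁻ ω, ENNReal.ofReal ((trunc t (X j ω))^2) ∂P) * ENNReal.ofReal (t^(p-1)) := by
          rw [lintegral_finset_sum (f := fun j t => P {ω | t < |X j ω|} * ENNReal.ofReal (t^(p-1))) _ fun j _ => (m1 j).mul wmeas,
            lintegral_finset_sum (f := fun j t => (ENNReal.ofReal (t^2))⁻¹ *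
                (∫⁻ ω, ENNReal.ofReal ((trunc t (X j ω))^2) ∂P) * ENNReal.ofReal (t^(p-1))) _ fun j _ => (minv.mul (m2 j)).mul wmeas]
  calc ∫⁻ ω, ENNReal.ofReal (|∑ j, X j ω| ^ p) ∂P
      = ENNReal.ofReal p * ∫⁻ t in Set.Ioi 0,
          P {ω | t < |∑ j, X j ω|} * ENNReal.ofReal (t ^ (p-1)) := lcS
    _ ≤ ENNReal.ofReal p * ((∑ j, ∫⁻ t in Set.Ioi 0,
            P {ω | t < |X j ω|} * ENNReal.ofReal (t^(p-1)))
          + ∑ j, ∫⁻ t in Set.Ioi 0, (ENNReal.ofReal (t^2))⁻¹ *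
              (∫⁻ ω, ENNReal.ofReal ((trunc t (X j ω))^2) ∂P) * ENNReal.ofReal (t^(p-1))) :=
        mul_le_mul_right key _
    _ = (∑ j, ENNReal.ofReal p * ∫⁻ t in Set.Ioi 0,
            P {ω | t < |X j ω|} * ENNReal.ofReal (t^(p-1)))
        + ∑ j, ENNReal.ofReal p * ∫⁻ t in Set.Ioi 0, (ENNReal.ofReal (t^2))⁻¹ *
            (∫⁻ ω, ENNReal.ofReal ((trunc t (X j ω))^2) ∂P) * ENNReal.ofReal (t^(p-1)) := by
        rw [mul_add, Finset.mul_sum, Finset.mul_sum]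
    _ = (∑ j, ∫⁻ ω, ENNReal.ofReal (|X j ω| ^ p) ∂P)
        + ∑ j, ENNReal.ofReal (p * (2-p)⁻¹) * ∫⁻ ω, ENNReal.ofReal (|X j ω| ^ p) ∂P := by
        congr 1
        · exact Finset.sum_congr rfl fun j _ => (lcX j).symm
        · refine Finset.sum_congr rfl fun j _ => ?_
          rw [fubini_piece hp1 hp2 (hX j), ← mul_assoc, ← ENNReal.ofReal_mul hp0.le]
    _ = ∑ j, (1 + ENNReal.ofReal (p * (2-p)⁻¹)) * ∫⁻ ω, ENNReal.ofReal (|X j ω| ^ p) ∂P := by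
        rw [← Finset.sum_add_distrib]
        exact Finset.sum_congr rfl fun j _ => by rw [add_mul, one_mul]
    _ = ENNReal.ofReal (2 / (2 - p)) * ∑ j, ∫⁻ ω, ENNReal.ofReal (|X j ω| ^ p) ∂P := by
        rw [Finset.mul_sum]
        refine Finset.sum_congr rfl fun j _ => ?_
        congr 1
        rw [← ENNReal.ofReal_one, ← ENNReal.ofReal_add zero_le_one (by positivity)]
        congr 1
        field_simp
        ring
end

section
/- Let p ∈ (1, 2] and define ℓ(p, x) = (1−x)^p − x^p + p x^{p−1} for x ∈ (0,1), and C_p = max_{x ∈ (0,1)} ℓ(p, x). Let (S_j)_{j=1}^n be a sequence of random vectors in a real separable Hilbert space H with differences X_j = S_j − S_{j−1} (S₀ = 0) satisfying E‖X_j‖ < ∞ and E(X_j | S_{j−1}) = 0 for all j ∈ {2,…,n}. Then E‖S_n‖^p ≤ E‖X₁‖^p + C_p Σ_{j=2}^n E‖X_j‖^p, assuming this inequality is known to hold in the real-valued case H = ℝ. -/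
open MeasureTheory Finset

/-- `ℓ(p,x) = (1-x)^p - x^p + p x^(p-1)`. -/
noncomputable def ellFun (p x : ℝ) : ℝ := (1 - x) ^ p - x ^ p + p * x ^ (p - 1)

/-- The best constant `C_p = max_{x ∈ (0,1)} ℓ(p,x)`. -/
noncomputable def bahrEsseenConst (p : ℝ) : ℝ := sSup (ellFun p '' Set.Ioo 0 1)

namespace BE

variable {p : ℝ}

lemma rpow_subadd {q x y : ℝ} (hq0 : 0 ≤ q) (hq1 : q ≤ 1) (hx : 0 ≤ x) (hy : 0 ≤ y) :
    (x + y) ^ q ≤ x ^ q + y ^ q := by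
  have h := NNReal.rpow_add_le_add_rpow x.toNNReal y.toNNReal hq0 hq1
  have h' := NNReal.coe_le_coe.2 h
  push_cast at h'
  rwa [Real.coe_toNNReal _ hx, Real.coe_toNNReal _ hy] at h'

lemma tangent {q t₀ t : ℝ} (hq0 : 0 < q) (hq1 : q ≤ 1) (ht0 : 0 < t₀) (ht : 0 ≤ t) :
    t ^ q ≤ t₀ ^ q + q * t₀ ^ (q - 1) * (t - t₀) := by
  have hs : -1 ≤ t / t₀ - 1 := by
    have : 0 ≤ t / t₀ := div_nonneg ht ht0.le
    linarith
  have h := rpow_one_add_le_one_add_mul_self hs hq0.le hq1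
  rw [add_sub_cancel] at h
  have hkey : t ^ q = t₀ ^ q * (t / t₀) ^ q := by
    rw [← Real.mul_rpow ht0.le (div_nonneg ht ht0.le), mul_div_cancel₀ _ ht0.ne']
  have ht₀q : (0:ℝ) ≤ t₀ ^ q := Real.rpow_nonneg ht0.le q
  calc t ^ q = t₀ ^ q * (t / t₀) ^ q := hkey
    _ ≤ t₀ ^ q * (1 + q * (t / t₀ - 1)) := mul_le_mul_of_nonneg_left h ht₀q
    _ = t₀ ^ q + q * (t₀ ^ q / t₀) * (t - t₀) := by field_simp
    _ = t₀ ^ q + q * t₀ ^ (q - 1) * (t - t₀) := by rw [← Real.rpow_sub_one ht0.ne']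

lemma lemA (hp1 : 1 < p) (hp2 : p ≤ 2) {a t : ℝ} (ha : 0 ≤ a) (ht : 0 ≤ t) :
    (a + t) ^ p ≤ a ^ p + p * a ^ (p - 1) * t + t ^ p := by
  set g : ℝ → ℝ := fun x => a ^ p + p * a ^ (p - 1) * x + x ^ p - (a + x) ^ p with hg
  have hderiv : ∀ x : ℝ, HasDerivAt g
      (p * a ^ (p - 1) + p * x ^ (p - 1) - p * (a + x) ^ (p - 1)) x := by
    intro x
    have h1 : HasDerivAt (fun x : ℝ => x ^ p) (p * x ^ (p - 1)) x :=
      Real.hasDerivAt_rpow_const (Or.inr hp1.le)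
    have h2 : HasDerivAt (fun x : ℝ => (a + x) ^ p) (p * (a + x) ^ (p - 1)) x := by
      have hinner : HasDerivAt (fun x : ℝ => a + x) 1 x := (hasDerivAt_id x).const_add a
      have := (Real.hasDerivAt_rpow_const (x := a + x) (p := p) (Or.inr hp1.le)).comp x hinner
      simpa [Function.comp_def] using this
    have h0 : HasDerivAt (fun x : ℝ => a ^ p + p * a ^ (p - 1) * x) (p * a ^ (p - 1)) x := by
      simpa using ((hasDerivAt_id x).const_mul (p * a ^ (p - 1))).const_add (a ^ p)
    exact (h0.add h1).sub h2
  have hcont : Continuous g := by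
    have : Differentiable ℝ g := fun x => (hderiv x).differentiableAt
    exact this.continuous
  have hmono : MonotoneOn g (Set.Ici 0) := by
    refine monotoneOn_of_deriv_nonneg (convex_Ici 0) hcont.continuousOn
      (fun x _ => (hderiv x).differentiableAt.differentiableWithinAt) ?_
    intro x hx
    rw [interior_Ici] at hx
    rw [(hderiv x).deriv]
    have hsub : (a + x) ^ (p - 1) ≤ a ^ (p - 1) + x ^ (p - 1) :=
      rpow_subadd (by linarith) (by linarith) ha (le_of_lt hx)
    nlinarith [hsub, hp1]
  have h0mem : (0:ℝ) ∈ Set.Ici (0:ℝ) := Set.self_mem_Ici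
  have htmem : t ∈ Set.Ici (0:ℝ) := ht
  have := hmono h0mem htmem ht
  have hg0 : g 0 = 0 := by
    simp [hg, Real.zero_rpow (by positivity : p ≠ 0)]
  rw [hg0] at this
  simp only [hg] at this
  linarith

lemma lemB (hp1 : 1 < p) (hp2 : p ≤ 2) {a x : ℝ} (hx : 0 ≤ x) (hxa : x ≤ a) :
    (a - x) ^ p + p * a ^ (p - 1) * x ≤ a ^ p + x ^ p := by
  have ha : 0 ≤ a := hx.trans hxa
  set h : ℝ → ℝ := fun x => a ^ p + x ^ p - (a - x) ^ p - p * a ^ (p - 1) * x with hh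
  have hderiv : ∀ y : ℝ, HasDerivAt h
      (p * y ^ (p - 1) + p * (a - y) ^ (p - 1) - p * a ^ (p - 1)) y := by
    intro y
    have h1 : HasDerivAt (fun y : ℝ => y ^ p) (p * y ^ (p - 1)) y :=
      Real.hasDerivAt_rpow_const (Or.inr hp1.le)
    have h2 : HasDerivAt (fun y : ℝ => (a - y) ^ p) (-(p * (a - y) ^ (p - 1))) y := by
      have hinner : HasDerivAt (fun y : ℝ => a - y) (-1) y := (hasDerivAt_id y).const_sub a
      have := (Real.hasDerivAt_rpow_const (x := a - y) (p := p) (Or.inr hp1.le)).comp y hinner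
      simpa [Function.comp_def] using this
    have h3 : HasDerivAt (fun y : ℝ => p * a ^ (p - 1) * y) (p * a ^ (p - 1)) y := by
      simpa using (hasDerivAt_id y).const_mul (p * a ^ (p - 1))
    have := (((h1.const_add (a ^ p)).sub h2).sub h3)
    rw [show p * y ^ (p - 1) + p * (a - y) ^ (p - 1) - p * a ^ (p - 1)
      = p * y ^ (p - 1) - -(p * (a - y) ^ (p - 1)) - p * a ^ (p - 1) by ring]
    exact this
  have hcont : Continuous h := by
    have : Differentiable ℝ h := fun y => (hderiv y).differentiableAt
    exact this.continuous
  have hmono : MonotoneOn h (Set.Icc 0 a) := by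
    refine monotoneOn_of_deriv_nonneg (convex_Icc 0 a) hcont.continuousOn
      (fun y _ => (hderiv y).differentiableAt.differentiableWithinAt) ?_
    intro y hy
    rw [interior_Icc] at hy
    rw [(hderiv y).deriv]
    have hsub : a ^ (p - 1) ≤ y ^ (p - 1) + (a - y) ^ (p - 1) := by
      have := rpow_subadd (q := p - 1) (by linarith) (by linarith) hy.1.le
        (by linarith [hy.2] : (0:ℝ) ≤ a - y)
      simpa [add_sub_cancel] using this
    nlinarith [hsub, hp1]
  have := hmono (Set.mem_Icc.2 ⟨le_refl 0, ha⟩) (Set.mem_Icc.2 ⟨hx, hxa⟩) hx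
  have hh0 : h 0 = 0 := by
    simp [hh, Real.zero_rpow (by positivity : p ≠ 0)]
  rw [hh0] at this
  simp only [hh] at this
  linarith

end BE

namespace BE

lemma ellFun_le_bahr (hp1 : 1 < p) (hp2 : p ≤ 2) {x : ℝ} (hx : x ∈ Set.Ioo (0:ℝ) 1) :
    ellFun p x ≤ bahrEsseenConst p := by
  have hp0 : (0:ℝ) ≤ p := by linarith
  have hbdd : BddAbove (ellFun p '' Set.Ioo 0 1) := by
    refine ⟨1 + p, ?_⟩
    rintro _ ⟨y, hy, rfl⟩
    obtain ⟨hy0, hy1⟩ := hy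
    have h1 : (1 - y) ^ p ≤ 1 := Real.rpow_le_one (by linarith) (by linarith) hp0
    have h2 : (0:ℝ) ≤ y ^ p := Real.rpow_nonneg hy0.le p
    have h3 : y ^ (p - 1) ≤ 1 := Real.rpow_le_one hy0.le hy1.le (by linarith)
    have h4 : p * y ^ (p - 1) ≤ p * 1 := by
      apply mul_le_mul_of_nonneg_left h3 hp0
    simp only [ellFun]
    linarith
  exact le_csSup hbdd (Set.mem_image_of_mem _ hx)

lemma bahr_ge_key (hp1 : 1 < p) (hp2 : p ≤ 2) : p * 2 ^ (1 - p) ≤ bahrEsseenConst p := by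
  have h := ellFun_le_bahr hp1 hp2 (x := 1/2) (by norm_num)
  have he : ellFun p (1/2) = p * (1/2 : ℝ) ^ (p - 1) := by
    simp only [ellFun]
    norm_num
  have h2 : ((1:ℝ)/2) ^ (p - 1) = 2 ^ (1 - p) := by
    rw [one_div, Real.inv_rpow (by norm_num : (0:ℝ) ≤ 2), ← Real.rpow_neg (by norm_num : (0:ℝ) ≤ 2)]
    ring_nf
  rw [he, h2] at h
  exact h

lemma one_le_bahr (hp1 : 1 < p) (hp2 : p ≤ 2) : 1 ≤ bahrEsseenConst p := by
  refine le_trans ?_ (bahr_ge_key hp1 hp2)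
  -- 2 ^ (p - 1) ≤ p
  have hgm := Real.geom_mean_le_arith_mean2_weighted (w₁ := p - 1) (w₂ := 2 - p)
    (p₁ := 2) (p₂ := 1) (by linarith) (by linarith) (by norm_num) (by norm_num) (by ring)
  rw [Real.one_rpow, mul_one] at hgm
  have h2p : (2:ℝ) ^ (p - 1) ≤ p := by linarith
  have hpos : (0:ℝ) < 2 ^ (p - 1) := Real.rpow_pos_of_pos (by norm_num) _
  have h21 : (2:ℝ) ^ (1 - p) = (2 ^ (p - 1))⁻¹ := by
    rw [← Real.rpow_neg (by norm_num : (0:ℝ) ≤ 2)]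
    ring_nf
  rw [h21, ← div_eq_mul_inv, le_div_iff₀ hpos, one_mul]
  exact h2p

lemma scalar_ineq (hp1 : 1 < p) (hp2 : p ≤ 2) {a : ℝ} (ha : 0 ≤ a) (t : ℝ) :
    |a + t| ^ p ≤ a ^ p + p * a ^ (p - 1) * t + bahrEsseenConst p * |t| ^ p := by
  have hC1 : 1 ≤ bahrEsseenConst p := one_le_bahr hp1 hp2
  rcases le_or_gt 0 t with htpos | htneg
  · -- t ≥ 0
    rw [abs_of_nonneg (by linarith : 0 ≤ a + t), abs_of_nonneg htpos]
    have hA := lemA hp1 hp2 ha htpos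
    have htp : (0:ℝ) ≤ t ^ p := Real.rpow_nonneg htpos p
    nlinarith
  rcases le_or_gt (-a) t with hta | hta
  · -- -a ≤ t < 0
    set x := -t with hxdef
    have hx0 : 0 ≤ x := by rw [hxdef]; linarith
    have hxa : x ≤ a := by rw [hxdef]; linarith
    have hB := lemB hp1 hp2 hx0 hxa
    have habs1 : |a + t| = a - x := by
      rw [abs_of_nonneg (by linarith : (0:ℝ) ≤ a + t), hxdef]
      ring
    have habs2 : |t| = x := by rw [abs_of_neg htneg, hxdef]
    rw [habs1, habs2]
    have hxp : (0:ℝ) ≤ x ^ p := Real.rpow_nonneg hx0 p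
    have ht' : t = -x := by rw [hxdef, neg_neg]
    rw [ht']
    nlinarith
  · -- t < -a
    set x := -t with hxdef
    have hax : a < x := by rw [hxdef]; linarith
    have hx0 : 0 < x := lt_of_le_of_lt ha hax
    have habs1 : |a + t| = x - a := by
      rw [abs_of_nonpos (by linarith : a + t ≤ 0), hxdef]
      ring
    have habs2 : |t| = x := by
      rw [abs_of_neg (by linarith : t < 0), hxdef]
    rw [habs1, habs2]
    have ht' : t = -x := by rw [hxdef, neg_neg]
    rw [ht']
    rcases eq_or_lt_of_le ha with ha0 | ha0
    · -- a = 0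
      rw [← ha0]
      have : (0:ℝ) ^ p = 0 := Real.zero_rpow (by positivity)
      have h1 : (0:ℝ) ^ (p - 1) = 0 := Real.zero_rpow (by intro h; linarith [h] : p - 1 ≠ 0)
      rw [sub_zero, this, h1]
      have hxp : (0:ℝ) ≤ x ^ p := Real.rpow_nonneg hx0.le p
      nlinarith
    · -- 0 < a < x; use ellFun
      set u := a / x with hudef
      have hu : u ∈ Set.Ioo (0:ℝ) 1 := by
        constructor
        · exact div_pos ha0 hx0
        · rw [div_lt_one hx0]; exact hax
      have hell := ellFun_le_bahr hp1 hp2 hu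
      simp only [ellFun] at hell
      -- multiply by x ^ p
      have hxp : (0:ℝ) < x ^ p := Real.rpow_pos_of_pos hx0 p
      have e1 : (1 - u) ^ p * x ^ p = (x - a) ^ p := by
        rw [← Real.mul_rpow (by rw [hudef]; rw [sub_nonneg, div_le_one hx0]; linarith)
          hx0.le]
        congr 1
        rw [hudef]
        field_simp
      have e2 : u ^ p * x ^ p = a ^ p := by
        rw [← Real.mul_rpow (le_of_lt (div_pos ha0 hx0)) hx0.le]
        congr 1
        field_simp
      have e3 : u ^ (p - 1) * x ^ p = a ^ (p - 1) * x := by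
        rw [hudef, Real.div_rpow ha0.le hx0.le]
        rw [div_mul_eq_mul_div, mul_div_assoc]
        congr 1
        rw [← Real.rpow_sub hx0]
        rw [show p - (p - 1) = 1 by ring, Real.rpow_one]
      have hmul := mul_le_mul_of_nonneg_right hell hxp.le
      have hexp : ((1 - u) ^ p - u ^ p + p * u ^ (p - 1)) * x ^ p
          = (x - a) ^ p - a ^ p + p * (a ^ (p - 1) * x) := by
        rw [add_mul, sub_mul, e1, e2, mul_assoc, e3]
      rw [hexp] at hmul
      nlinarith
  
end BE

namespace BE

open scoped RealInnerProductSpace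

lemma sq_rpow {c : ℝ} (hc : 0 ≤ c) (r : ℝ) : ((c ^ 2 : ℝ)) ^ r = c ^ (2 * r) := by
  rw [← Real.rpow_natCast c 2, ← Real.rpow_mul hc]
  norm_num

variable {H : Type*} [NormedAddCommGroup H] [InnerProductSpace ℝ H] {p : ℝ}

lemma hilbert_ineq (hp1 : 1 < p) (hp2 : p ≤ 2) (s x : H) :
    ‖s + x‖ ^ p ≤ ‖s‖ ^ p + p * (‖s‖ ^ (p - 2) * ⟪s, x⟫)
      + bahrEsseenConst p * ‖x‖ ^ p := by
  have hC1 : 1 ≤ bahrEsseenConst p := one_le_bahr hp1 hp2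
  have hp0 : p ≠ 0 := by positivity
  by_cases hx0 : x = 0
  · subst hx0
    simp [Real.zero_rpow hp0]
  by_cases hs0 : s = 0
  · subst hs0
    simp only [zero_add, norm_zero, Real.zero_rpow hp0, inner_zero_left, mul_zero, add_zero,
      zero_add]
    nlinarith [Real.rpow_nonneg (norm_nonneg x) p]
  set a := ‖s‖ with ha_def
  set b := ‖x‖ with hb_def
  set τ := ⟪s, x⟫ with hτ_def
  have ha : 0 < a := norm_pos_iff.mpr hs0
  have hb : 0 < b := norm_pos_iff.mpr hx0
  have hN2 : ‖s + x‖ ^ 2 = a ^ 2 + 2 * τ + b ^ 2 := norm_add_sq_real s x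
  have hτab : |τ| ≤ a * b := abs_real_inner_le_norm s x
  have hNp : ‖s + x‖ ^ p = ((‖s + x‖ ^ 2 : ℝ)) ^ (p / 2) := by
    rw [sq_rpow (norm_nonneg _), show 2 * (p / 2) = p by ring]
  have hN2nonneg : (0:ℝ) ≤ ‖s + x‖ ^ 2 := sq_nonneg _
  have hbp : (0:ℝ) ≤ b ^ p := Real.rpow_nonneg hb.le p
  rcases le_total b (2 * a) with hcase | hcase
  · -- b ≤ 2a : tangent at a^2
    have htan := tangent (q := p / 2) (by linarith) (by linarith)
      (t₀ := (a ^ 2 : ℝ)) (by positivity) (t := ‖s + x‖ ^ 2) hN2nonneg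
    have e1 : ((a ^ 2 : ℝ)) ^ (p / 2) = a ^ p := by
      rw [sq_rpow ha.le, show 2 * (p / 2) = p by ring]
    have e2 : ((a ^ 2 : ℝ)) ^ (p / 2 - 1) = a ^ (p - 2) := by
      rw [sq_rpow ha.le, show 2 * (p / 2 - 1) = p - 2 by ring]
    rw [e1, e2, hN2] at htan
    rw [hNp, hN2]
    have hdiff : a ^ 2 + 2 * τ + b ^ 2 - a ^ 2 = 2 * τ + b ^ 2 := by ring
    rw [hdiff] at htan
    -- key: a^(p-2) * b^2 ≤ 2^(2-p) * b^p
    have hmono : a ^ (p - 2) ≤ (b / 2) ^ (p - 2) :=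
      Real.rpow_le_rpow_of_nonpos (by positivity)
        (by linarith : b / 2 ≤ a) (by linarith)
    have hdiv : ((b / 2 : ℝ)) ^ (p - 2) = b ^ (p - 2) * 2 ^ (2 - p) := by
      rw [Real.div_rpow hb.le (by norm_num : (0:ℝ) ≤ 2), div_eq_mul_inv,
        ← Real.rpow_neg (by norm_num : (0:ℝ) ≤ 2), show -(p - 2) = 2 - p by ring]
    have hbsplit : b ^ (p - 2) * (b ^ 2 : ℝ) = b ^ p := by
      rw [← Real.rpow_natCast b 2, ← Real.rpow_add hb]
      norm_num
    have hkey : a ^ (p - 2) * (b ^ 2 : ℝ) ≤ 2 ^ (2 - p) * b ^ p := by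
      calc a ^ (p - 2) * (b ^ 2 : ℝ) ≤ (b / 2) ^ (p - 2) * b ^ 2 := by
            apply mul_le_mul_of_nonneg_right hmono (sq_nonneg b)
        _ = 2 ^ (2 - p) * b ^ p := by rw [hdiv, mul_right_comm, hbsplit, mul_comm]
    have h2split : (2:ℝ) ^ (2 - p) = 2 * 2 ^ (1 - p) := by
      rw [show (2:ℝ) - p = 1 + (1 - p) by ring, Real.rpow_add (by norm_num : (0:ℝ) < 2),
        Real.rpow_one]
    have hCkey : p * 2 ^ (1 - p) * b ^ p ≤ bahrEsseenConst p * b ^ p :=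
      mul_le_mul_of_nonneg_right (bahr_ge_key hp1 hp2) hbp
    have hsplit2 : p / 2 * a ^ (p - 2) * (2 * τ + b ^ 2)
        = p * (a ^ (p - 2) * τ) + (p / 2) * (a ^ (p - 2) * b ^ 2) := by ring
    have h3 : (p / 2) * (a ^ (p - 2) * b ^ 2) ≤ (p / 2) * (2 ^ (2 - p) * b ^ p) :=
      mul_le_mul_of_nonneg_left hkey (by linarith : (0:ℝ) ≤ p / 2)
    have h4 : (p / 2) * ((2:ℝ) ^ (2 - p) * b ^ p) = p * 2 ^ (1 - p) * b ^ p := by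
      rw [h2split]; ring
    linarith [htan, hsplit2.le, hsplit2.ge, h3, h4.le, h4.ge, hCkey]
  · -- 2a ≤ b : tangent at (b-a)^2
    have hba : 0 < b - a := by linarith
    have htan := tangent (q := p / 2) (by linarith) (by linarith)
      (t₀ := ((b - a) ^ 2 : ℝ)) (by positivity) (t := ‖s + x‖ ^ 2) hN2nonneg
    have e1 : (((b - a) ^ 2 : ℝ)) ^ (p / 2) = (b - a) ^ p := by
      rw [sq_rpow hba.le, show 2 * (p / 2) = p by ring]
    have e2 : (((b - a) ^ 2 : ℝ)) ^ (p / 2 - 1) = (b - a) ^ (p - 2) := by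
      rw [sq_rpow hba.le, show 2 * (p / 2 - 1) = p - 2 by ring]
    rw [e1, e2, hN2] at htan
    rw [hNp, hN2]
    have hdiff : a ^ 2 + 2 * τ + b ^ 2 - (b - a) ^ 2 = 2 * (τ + a * b) := by ring
    rw [hdiff] at htan
    have hτab' : 0 ≤ τ + a * b := by
      have := (abs_le.mp hτab).1
      linarith
    have hmono : (b - a) ^ (p - 2) ≤ a ^ (p - 2) :=
      Real.rpow_le_rpow_of_nonpos ha (by linarith) (by linarith)
    have hstep : (p / 2) * (b - a) ^ (p - 2) * (2 * (τ + a * b))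
        ≤ p * a ^ (p - 2) * (τ + a * b) := by
      have := mul_le_mul_of_nonneg_right hmono hτab'
      nlinarith [this, hp1]
    have ha1 : a ^ (p - 1) = a ^ (p - 2) * a := by
      rw [show p - 1 = (p - 2) + 1 by ring, Real.rpow_add_one ha.ne']
    have hscal := scalar_ineq hp1 hp2 ha.le (-b)
    have habs1 : |a + -b| = b - a := by
      rw [abs_of_nonpos (by linarith : a + -b ≤ 0)]; ring
    have habs2 : |(-b : ℝ)| = b := by rw [abs_neg, abs_of_pos hb]
    rw [habs1, habs2] at hscal
    -- hscal : (b-a)^p ≤ a^p + p * a^(p-1) * (-b) + C * b^p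
    have hexp : p * a ^ (p - 2) * (τ + a * b)
        = p * (a ^ (p - 2) * τ) + p * a ^ (p - 1) * b := by
      rw [ha1]; ring
    linarith [htan, hstep, hscal, hexp.le, hexp.ge]

end BE

namespace BE

open MeasureTheory Filter
open scoped RealInnerProductSpace Topology

variable {Ω : Type*} {H : Type*} [NormedAddCommGroup H] [InnerProductSpace ℝ H]
  [CompleteSpace H] {m m0 : MeasurableSpace Ω} {μ : Measure Ω}

lemma inner_integrable {g f : Ω → H} (hg : AEStronglyMeasurable g μ)
    (hf : Integrable f μ) {c : ℝ} (hb : ∀ ω, ‖g ω‖ ≤ c) :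
    Integrable (fun ω => ⟪g ω, f ω⟫) μ := by
  refine Integrable.mono' (hf.norm.const_mul c) (hg.inner hf.aestronglyMeasurable) ?_
  filter_upwards with ω
  calc ‖⟪g ω, f ω⟫‖ ≤ ‖g ω‖ * ‖f ω‖ := norm_inner_le_norm _ _
    _ ≤ c * ‖f ω‖ := mul_le_mul_of_nonneg_right (hb ω) (norm_nonneg _)

lemma integral_inner_simple (hm : m ≤ m0) (g : @SimpleFunc Ω m H) {f : Ω → H}
    (hf : Integrable f μ)
    (hfz : ∀ s : Set Ω, MeasurableSet[m] s → ∫ ω in s, f ω ∂μ = 0) :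
    ∫ ω, ⟪g ω, f ω⟫ ∂μ = 0 := by
  apply @SimpleFunc.induction _ _ m _ (fun g => ∫ ω, ⟪g ω, f ω⟫ ∂μ = 0)
    (fun c s hs => ?_) (fun g₁ g₂ _ h₁ h₂ => ?_) g
  · classical
    simp only [SimpleFunc.coe_piecewise, SimpleFunc.coe_const, SimpleFunc.coe_zero]
    have heq : (fun ω => ⟪s.piecewise (Function.const Ω c) (Function.const Ω 0) ω, f ω⟫)
        = s.indicator (fun ω => ⟪c, f ω⟫) := by
      ext ω
      by_cases hω : ω ∈ s
      · simp [Set.piecewise, hω]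
      · simp [Set.piecewise, hω]
    rw [heq, integral_indicator (hm s hs), integral_inner hf.integrableOn c, hfz s hs,
      inner_zero_right]
  · obtain ⟨c₁, hc₁⟩ := @SimpleFunc.exists_forall_norm_le Ω H m _ g₁
    obtain ⟨c₂, hc₂⟩ := @SimpleFunc.exists_forall_norm_le Ω H m _ g₂
    have hm₁ : AEStronglyMeasurable (⇑g₁) μ :=
      ((g₁.stronglyMeasurable).mono hm).aestronglyMeasurable
    have hm₂ : AEStronglyMeasurable (⇑g₂) μ :=
      ((g₂.stronglyMeasurable).mono hm).aestronglyMeasurable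
    have hi₁ := inner_integrable hm₁ hf hc₁
    have hi₂ := inner_integrable hm₂ hf hc₂
    have : ∫ ω, ⟪(g₁ + g₂) ω, f ω⟫ ∂μ
        = (∫ ω, ⟪g₁ ω, f ω⟫ ∂μ) + ∫ ω, ⟪g₂ ω, f ω⟫ ∂μ := by
      rw [← integral_add hi₁ hi₂]
      congr 1
      ext ω
      simp [inner_add_left]
    rw [this, h₁, h₂, add_zero]

lemma integral_inner_bounded (hm : m ≤ m0) {g f : Ω → H}
    (hg : StronglyMeasurable[m] g) {c : ℝ} (hb : ∀ ω, ‖g ω‖ ≤ c)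
    (hf : Integrable f μ)
    (hfz : ∀ s : Set Ω, MeasurableSet[m] s → ∫ ω in s, f ω ∂μ = 0) :
    ∫ ω, ⟪g ω, f ω⟫ ∂μ = 0 := by
  rcases isEmpty_or_nonempty Ω with hΩ | hΩ
  · have : μ = 0 := by
      ext s _
      simp [Set.eq_empty_of_isEmpty s]
    simp [this]
  have hc0 : 0 ≤ c := (norm_nonneg _).trans (hb (Classical.arbitrary _))
  set fs := hg.approxBounded c with hfs
  have h_tend : ∀ ω, Tendsto (fun n => fs n ω) atTop (𝓝 (g ω)) := fun ω =>
    hg.tendsto_approxBounded_of_norm_le (hb ω)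
  have h_bound : ∀ n ω, ‖fs n ω‖ ≤ c := hg.norm_approxBounded_le hc0
  have h_int : ∀ n, ∫ ω, ⟪fs n ω, f ω⟫ ∂μ = 0 := fun n =>
    integral_inner_simple hm (fs n) hf hfz
  have h_lim : Tendsto (fun n => ∫ ω, ⟪fs n ω, f ω⟫ ∂μ) atTop
      (𝓝 (∫ ω, ⟪g ω, f ω⟫ ∂μ)) := by
    refine tendsto_integral_of_dominated_convergence (fun ω => c * ‖f ω‖)
      (fun n => ((fs n).stronglyMeasurable.mono hm).aestronglyMeasurable.inner
        hf.aestronglyMeasurable)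
      (hf.norm.const_mul c) (fun n => ?_) ?_
    · filter_upwards with ω
      calc ‖⟪fs n ω, f ω⟫‖ ≤ ‖fs n ω‖ * ‖f ω‖ := norm_inner_le_norm _ _
        _ ≤ c * ‖f ω‖ := mul_le_mul_of_nonneg_right (h_bound n ω) (norm_nonneg _)
    · filter_upwards with ω
      exact (h_tend ω).inner tendsto_const_nhds
  simp only [h_int] at h_lim
  exact tendsto_nhds_unique h_lim tendsto_const_nhds

lemma integral_inner_eq_zero (hm : m ≤ m0) {g f : Ω → H}
    (hg : StronglyMeasurable[m] g) (hf : Integrable f μ)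
    (hgf : Integrable (fun ω => ‖g ω‖ * ‖f ω‖) μ)
    (hfz : ∀ s : Set Ω, MeasurableSet[m] s → ∫ ω in s, f ω ∂μ = 0) :
    ∫ ω, ⟪g ω, f ω⟫ ∂μ = 0 := by
  set gN : ℕ → Ω → H := fun N => Set.indicator {ω | ‖g ω‖ ≤ (N:ℝ)} g with hgN
  have hsetm : ∀ N : ℕ, MeasurableSet[m] {ω | ‖g ω‖ ≤ (N:ℝ)} := fun N =>
    hg.norm.measurableSet_le stronglyMeasurable_const
  have hgNm : ∀ N, StronglyMeasurable[m] (gN N) := fun N => hg.indicator (hsetm N)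
  have hgNb : ∀ (N : ℕ) ω, ‖gN N ω‖ ≤ (N:ℝ) := by
    intro N ω
    show ‖Set.indicator {ω | ‖g ω‖ ≤ (N:ℝ)} g ω‖ ≤ (N:ℝ)
    by_cases hω : ω ∈ {ω | ‖g ω‖ ≤ (N:ℝ)}
    · rw [Set.indicator_of_mem hω]; exact hω
    · rw [Set.indicator_of_notMem hω]; simp
  have hzero : ∀ N, ∫ ω, ⟪gN N ω, f ω⟫ ∂μ = 0 := fun N =>
    integral_inner_bounded hm (hgNm N) (hgNb N) hf hfz
  have h_lim : Tendsto (fun N => ∫ ω, ⟪gN N ω, f ω⟫ ∂μ) atTop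
      (𝓝 (∫ ω, ⟪g ω, f ω⟫ ∂μ)) := by
    refine tendsto_integral_of_dominated_convergence (fun ω => ‖g ω‖ * ‖f ω‖)
      (fun N => ((hgNm N).mono hm).aestronglyMeasurable.inner hf.aestronglyMeasurable)
      hgf (fun N => ?_) ?_
    · filter_upwards with ω
      calc ‖⟪gN N ω, f ω⟫‖ ≤ ‖gN N ω‖ * ‖f ω‖ := norm_inner_le_norm _ _
        _ ≤ ‖g ω‖ * ‖f ω‖ := by
            apply mul_le_mul_of_nonneg_right _ (norm_nonneg _)
            exact norm_indicator_le_norm_self g ω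
    · filter_upwards with ω
      apply tendsto_atTop_of_eventually_const (i₀ := ⌈‖g ω‖⌉₊)
      intro N hN
      have : ω ∈ {ω | ‖g ω‖ ≤ (N:ℝ)} := by
        simp only [Set.mem_setOf_eq]
        exact (Nat.ceil_le.mp hN)
      show ⟪Set.indicator {ω | ‖g ω‖ ≤ (N:ℝ)} g ω, f ω⟫ = ⟪g ω, f ω⟫
      rw [Set.indicator_of_mem this]
  simp only [hzero] at h_lim
  exact tendsto_nhds_unique h_lim tendsto_const_nhds

end BE

namespace BE

open MeasureTheory Filter
open scoped RealInnerProductSpace Topology ENNReal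

lemma mul_bound {p : ℝ} (hp1 : 1 < p) (hp2 : p ≤ 2) {u v : ℝ} (hu : 0 ≤ u) (hv : 0 ≤ v) :
    u ^ (p - 2) * u * v ≤ u ^ p + v ^ p := by
  rcases eq_or_lt_of_le hu with hu0 | hu0
  · rw [← hu0, mul_zero, zero_mul]
    positivity
  have h1 : u ^ (p - 2) * u = u ^ (p - 1) := by
    rw [show p - 1 = p - 2 + 1 by ring, Real.rpow_add_one hu0.ne']
  rw [h1]
  rcases le_total v u with hvu | hvu
  · have h2 : u ^ (p - 1) * u = u ^ p := by
      rw [← Real.rpow_add_one hu0.ne' (p - 1), show p - 1 + 1 = p by ring]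
    have h3 : u ^ (p - 1) * v ≤ u ^ (p - 1) * u :=
      mul_le_mul_of_nonneg_left hvu (Real.rpow_nonneg hu _)
    have h4 : (0:ℝ) ≤ v ^ p := Real.rpow_nonneg hv _
    linarith [h2.le, h2.ge]
  · have hv0 : 0 < v := lt_of_lt_of_le hu0 hvu
    have h2 : v ^ (p - 1) * v = v ^ p := by
      rw [← Real.rpow_add_one hv0.ne' (p - 1), show p - 1 + 1 = p by ring]
    have h3 : u ^ (p - 1) ≤ v ^ (p - 1) := Real.rpow_le_rpow hu hvu (by linarith)
    have h4 : u ^ (p - 1) * v ≤ v ^ (p - 1) * v := mul_le_mul_of_nonneg_right h3 hv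
    have h5 : (0:ℝ) ≤ u ^ p := Real.rpow_nonneg hu _
    linarith [h2.le, h2.ge]

variable {H : Type*} [NormedAddCommGroup H] [InnerProductSpace ℝ H]
  [CompleteSpace H] [SecondCountableTopology H] [MeasurableSpace H] [BorelSpace H]
  {Ω : Type*} [mΩ : MeasurableSpace Ω]

lemma step_lemma {p : ℝ} (hp1 : 1 < p) (hp2 : p ≤ 2)
    (P : Measure Ω) [IsProbabilityMeasure P]
    {T X : Ω → H} (hT : Measurable T) (hXm : Measurable X)
    (hXi : Integrable X P)
    (hc : P[X | MeasurableSpace.comap T inferInstance] =ᵐ[P] 0) :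
    ∫⁻ ω, ENNReal.ofReal (‖T ω + X ω‖ ^ p) ∂P
      ≤ ∫⁻ ω, ENNReal.ofReal (‖T ω‖ ^ p) ∂P
        + ENNReal.ofReal (bahrEsseenConst p) * ∫⁻ ω, ENNReal.ofReal (‖X ω‖ ^ p) ∂P := by
  set C := bahrEsseenConst p with hCdef
  have hC1 : 1 ≤ C := one_le_bahr hp1 hp2
  have hm : MeasurableSpace.comap T inferInstance ≤ mΩ := hT.comap_le
  by_cases hA : ∫⁻ ω, ENNReal.ofReal (‖T ω‖ ^ p) ∂P = ⊤
  · rw [hA]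
    simpa using le_top
  by_cases hB : ∫⁻ ω, ENNReal.ofReal (‖X ω‖ ^ p) ∂P = ⊤
  · have hCne : ENNReal.ofReal C ≠ 0 := by
      simp only [ne_eq, ENNReal.ofReal_eq_zero, not_le]
      linarith
    rw [hB, ENNReal.mul_top hCne]
    simpa using le_top
  have hTXm : Measurable fun ω => ‖T ω‖ ^ p := hT.norm.pow measurable_const
  have hXXm : Measurable fun ω => ‖X ω‖ ^ p := hXm.norm.pow measurable_const
  have hTp_int : Integrable (fun ω => ‖T ω‖ ^ p) P := by
    refine ⟨hTXm.aestronglyMeasurable, ?_⟩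
    rw [hasFiniteIntegral_iff_ofReal (ae_of_all _ fun ω => Real.rpow_nonneg (norm_nonneg _) p)]
    exact Ne.lt_top hA
  have hXp_int : Integrable (fun ω => ‖X ω‖ ^ p) P := by
    refine ⟨hXXm.aestronglyMeasurable, ?_⟩
    rw [hasFiniteIntegral_iff_ofReal (ae_of_all _ fun ω => Real.rpow_nonneg (norm_nonneg _) p)]
    exact Ne.lt_top hB
  set g : Ω → H := fun ω => (‖T ω‖ ^ (p - 2)) • T ω with hgdef
  have hgM : Measurable g := (hT.norm.pow measurable_const).smul hT
  have hTm' : Measurable[MeasurableSpace.comap T inferInstance] T := fun s hs => ⟨s, hs, rfl⟩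
  have hψ : Measurable fun v : H => (‖v‖ ^ (p - 2)) • v :=
    (measurable_norm.pow measurable_const).smul measurable_id
  have hgm : StronglyMeasurable[MeasurableSpace.comap T inferInstance] g :=
    (hψ.comp hTm').stronglyMeasurable
  have hgnorm : ∀ ω, ‖g ω‖ = ‖T ω‖ ^ (p - 2) * ‖T ω‖ := by
    intro ω
    rw [hgdef]
    simp only [norm_smul, Real.norm_eq_abs, abs_of_nonneg (Real.rpow_nonneg (norm_nonneg _) _)]
  have hfz : ∀ s : Set Ω, MeasurableSet[MeasurableSpace.comap T inferInstance] s →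
      ∫ ω in s, X ω ∂P = 0 := by
    intro s hs
    rw [← setIntegral_condExp hm hXi hs]
    calc ∫ ω in s, (P[X|MeasurableSpace.comap T inferInstance]) ω ∂P
        = ∫ ω in s, (0 : H) ∂P := integral_congr_ae (ae_restrict_of_ae hc)
      _ = 0 := by simp
  have hgf : Integrable (fun ω => ‖g ω‖ * ‖X ω‖) P := by
    refine Integrable.mono' (hTp_int.add hXp_int)
      (hgM.norm.mul hXm.norm).aestronglyMeasurable ?_
    filter_upwards with ω
    rw [Real.norm_of_nonneg (mul_nonneg (norm_nonneg _) (norm_nonneg _)), hgnorm ω]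
    exact mul_bound hp1 hp2 (norm_nonneg _) (norm_nonneg _)
  have key0 : ∫ ω, ⟪g ω, X ω⟫ ∂P = 0 := integral_inner_eq_zero hm hgm hXi hgf hfz
  have hmid_int : Integrable (fun ω => ⟪g ω, X ω⟫) P := by
    refine Integrable.mono' (hTp_int.add hXp_int)
      (hgM.inner hXm).aestronglyMeasurable ?_
    filter_upwards with ω
    calc ‖⟪g ω, X ω⟫‖ ≤ ‖g ω‖ * ‖X ω‖ := norm_inner_le_norm _ _
      _ ≤ ‖T ω‖ ^ p + ‖X ω‖ ^ p := by
          rw [hgnorm ω]; exact mul_bound hp1 hp2 (norm_nonneg _) (norm_nonneg _)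
  have pointwise : ∀ ω, ‖T ω + X ω‖ ^ p
      ≤ ‖T ω‖ ^ p + p * ⟪g ω, X ω⟫ + C * ‖X ω‖ ^ p := by
    intro ω
    have h := hilbert_ineq hp1 hp2 (T ω) (X ω)
    have : ⟪g ω, X ω⟫ = ‖T ω‖ ^ (p - 2) * ⟪T ω, X ω⟫ := real_inner_smul_left _ _ _
    rw [this]
    exact h
  have hsum_int : Integrable
      (fun ω => ‖T ω‖ ^ p + p * ⟪g ω, X ω⟫ + C * ‖X ω‖ ^ p) P :=
    (hTp_int.add (hmid_int.const_mul p)).add (hXp_int.const_mul C)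
  have hlhs_int : Integrable (fun ω => ‖T ω + X ω‖ ^ p) P := by
    refine Integrable.mono' hsum_int
      ((hT.add hXm).norm.pow measurable_const).aestronglyMeasurable ?_
    filter_upwards with ω
    rw [Real.norm_of_nonneg (Real.rpow_nonneg (norm_nonneg _) p)]
    exact pointwise ω
  have hmid1 : Integrable (fun ω => p * ⟪g ω, X ω⟫) P := hmid_int.const_mul p
  have hX1 : Integrable (fun ω => C * ‖X ω‖ ^ p) P := hXp_int.const_mul C
  have h12 : Integrable (fun ω => ‖T ω‖ ^ p + p * ⟪g ω, X ω⟫) P := hTp_int.add hmid1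
  have hint_eq : ∫ ω, (‖T ω‖ ^ p + p * ⟪g ω, X ω⟫ + C * ‖X ω‖ ^ p) ∂P
      = (∫ ω, ‖T ω‖ ^ p ∂P) + C * ∫ ω, ‖X ω‖ ^ p ∂P := by
    rw [integral_add h12 hX1, integral_add hTp_int hmid1, integral_const_mul,
      integral_const_mul, key0, mul_zero, add_zero]
  have hmono : ∫ ω, ‖T ω + X ω‖ ^ p ∂P
      ≤ (∫ ω, ‖T ω‖ ^ p ∂P) + C * ∫ ω, ‖X ω‖ ^ p ∂P := by
    rw [← hint_eq]
    exact integral_mono hlhs_int hsum_int pointwise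
  have hl1 : ∫⁻ ω, ENNReal.ofReal (‖T ω + X ω‖ ^ p) ∂P
      = ENNReal.ofReal (∫ ω, ‖T ω + X ω‖ ^ p ∂P) :=
    (ofReal_integral_eq_lintegral_ofReal hlhs_int
      (ae_of_all _ fun ω => Real.rpow_nonneg (norm_nonneg _) p)).symm
  have hl2 : ∫⁻ ω, ENNReal.ofReal (‖T ω‖ ^ p) ∂P
      = ENNReal.ofReal (∫ ω, ‖T ω‖ ^ p ∂P) :=
    (ofReal_integral_eq_lintegral_ofReal hTp_int
      (ae_of_all _ fun ω => Real.rpow_nonneg (norm_nonneg _) p)).symm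
  have hl3 : ∫⁻ ω, ENNReal.ofReal (‖X ω‖ ^ p) ∂P
      = ENNReal.ofReal (∫ ω, ‖X ω‖ ^ p ∂P) :=
    (ofReal_integral_eq_lintegral_ofReal hXp_int
      (ae_of_all _ fun ω => Real.rpow_nonneg (norm_nonneg _) p)).symm
  rw [hl1, hl2, hl3]
  have hTnn : 0 ≤ ∫ ω, ‖T ω‖ ^ p ∂P :=
    integral_nonneg fun ω => Real.rpow_nonneg (norm_nonneg _) p
  have hXnn : 0 ≤ ∫ ω, ‖X ω‖ ^ p ∂P :=
    integral_nonneg fun ω => Real.rpow_nonneg (norm_nonneg _) p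
  calc ENNReal.ofReal (∫ ω, ‖T ω + X ω‖ ^ p ∂P)
      ≤ ENNReal.ofReal ((∫ ω, ‖T ω‖ ^ p ∂P) + C * ∫ ω, ‖X ω‖ ^ p ∂P) :=
        ENNReal.ofReal_le_ofReal hmono
    _ = ENNReal.ofReal (∫ ω, ‖T ω‖ ^ p ∂P)
        + ENNReal.ofReal (C * ∫ ω, ‖X ω‖ ^ p ∂P) :=
        ENNReal.ofReal_add hTnn (mul_nonneg (by linarith) hXnn)
    _ = ENNReal.ofReal (∫ ω, ‖T ω‖ ^ p ∂P)
        + ENNReal.ofReal C * ENNReal.ofReal (∫ ω, ‖X ω‖ ^ p ∂P) := by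
        rw [ENNReal.ofReal_mul (by linarith : (0:ℝ) ≤ C)]

end BE

theorem vMartingale_bahr_esseen_hilbert
    (p : ℝ) (hp1 : 1 < p) (hp2 : p ≤ 2)
    {H : Type*} [NormedAddCommGroup H] [InnerProductSpace ℝ H]
    [CompleteSpace H] [SecondCountableTopology H] [MeasurableSpace H] [BorelSpace H]
    {Ω : Type*} [MeasurableSpace Ω] (P : Measure Ω) [IsProbabilityMeasure P]
    (n : ℕ) (X : ℕ → Ω → H) (hX : ∀ j, Measurable (X j))
    (S : ℕ → Ω → H) (hS : ∀ m, S m = fun ω => ∑ i ∈ Finset.Icc 1 m, X i ω)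
    (hint : ∀ j ∈ Finset.Icc 2 n, Integrable (fun ω => ‖X j ω‖) P)
    (hcond : ∀ j ∈ Finset.Icc 2 n,
      P[X j | MeasurableSpace.comap (S (j - 1)) inferInstance] =ᵐ[P] 0)
    -- the inequality is assumed to be known in the real-valued case `H = ℝ`:
    (hreal : ∀ (Ω' : Type) (mΩ' : MeasurableSpace Ω') (P' : Measure Ω'),
      IsProbabilityMeasure P' →
      ∀ (Y : ℕ → Ω' → ℝ) (S' : ℕ → Ω' → ℝ),
      (∀ j, Measurable (Y j)) →
      (∀ m, S' m = fun ω => ∑ i ∈ Finset.Icc 1 m, Y i ω) →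
      (∀ j ∈ Finset.Icc 2 n, Integrable (fun ω => |Y j ω|) P') →
      (∀ j ∈ Finset.Icc 2 n,
        P'[Y j | MeasurableSpace.comap (S' (j - 1)) inferInstance] =ᵐ[P'] 0) →
      ∫⁻ ω, ENNReal.ofReal (|S' n ω| ^ p) ∂P'
        ≤ ∫⁻ ω, ENNReal.ofReal (|Y 1 ω| ^ p) ∂P'
          + ENNReal.ofReal (bahrEsseenConst p) *
              ∑ j ∈ Finset.Icc 2 n, ∫⁻ ω, ENNReal.ofReal (|Y j ω| ^ p) ∂P') :
    ∫⁻ ω, ENNReal.ofReal (‖S n ω‖ ^ p) ∂P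
      ≤ ∫⁻ ω, ENNReal.ofReal (‖X 1 ω‖ ^ p) ∂P
        + ENNReal.ofReal (bahrEsseenConst p) *
            ∑ j ∈ Finset.Icc 2 n, ∫⁻ ω, ENNReal.ofReal (‖X j ω‖ ^ p) ∂P := by
  have hSm : ∀ m, Measurable (S m) := by
    intro m
    rw [hS m]
    exact Finset.measurable_sum _ (fun i _ => hX i)
  rcases Nat.eq_zero_or_pos n with rfl | hn
  · have h0 : ∀ ω, S 0 ω = 0 := by
      intro ω
      rw [hS 0]
      simp
    have : ∫⁻ ω, ENNReal.ofReal (‖S 0 ω‖ ^ p) ∂P = 0 := by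
      have : ∀ ω, ENNReal.ofReal (‖S 0 ω‖ ^ p) = 0 := by
        intro ω
        rw [h0 ω]
        simp [Real.zero_rpow (by positivity : p ≠ 0)]
      rw [lintegral_congr this]
      simp
    rw [this]
    exact bot_le
  have main : ∀ m, 1 ≤ m → m ≤ n →
      ∫⁻ ω, ENNReal.ofReal (‖S m ω‖ ^ p) ∂P
        ≤ ∫⁻ ω, ENNReal.ofReal (‖X 1 ω‖ ^ p) ∂P
          + ENNReal.ofReal (bahrEsseenConst p) *
              ∑ j ∈ Finset.Icc 2 m, ∫⁻ ω, ENNReal.ofReal (‖X j ω‖ ^ p) ∂P := by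
    intro m hm
    induction m, hm using Nat.le_induction with
    | base =>
      intro _
      have h1 : ∀ ω, S 1 ω = X 1 ω := by
        intro ω
        rw [hS 1]
        simp
      have hempty : Finset.Icc 2 1 = (∅ : Finset ℕ) := Finset.Icc_eq_empty (by omega)
      rw [hempty]
      simp only [Finset.sum_empty, mul_zero, add_zero]
      exact le_of_eq (lintegral_congr fun ω => by rw [h1 ω])
    | succ m hm ih =>
      intro hmn
      have hmn' : m ≤ n := le_trans (Nat.le_succ m) hmn
      have hj : m + 1 ∈ Finset.Icc 2 n := Finset.mem_Icc.mpr ⟨by omega, hmn⟩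
      have hXi : Integrable (X (m + 1)) P :=
        (integrable_norm_iff (hX (m + 1)).aestronglyMeasurable).mp (hint _ hj)
      have hcnd := hcond _ hj
      have hcnd' : P[X (m + 1) | MeasurableSpace.comap (S m) inferInstance] =ᵐ[P] 0 := by
        simpa using hcnd
      have hsucc : ∀ ω, S (m + 1) ω = S m ω + X (m + 1) ω := by
        intro ω
        rw [hS (m + 1), hS m]
        exact Finset.sum_Icc_succ_top (by omega : 1 ≤ m + 1) _
      have hstep := BE.step_lemma hp1 hp2 P (hSm m) (hX (m + 1)) hXi hcnd'
      calc ∫⁻ ω, ENNReal.ofReal (‖S (m + 1) ω‖ ^ p) ∂P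
          = ∫⁻ ω, ENNReal.ofReal (‖S m ω + X (m + 1) ω‖ ^ p) ∂P :=
            lintegral_congr fun ω => by rw [hsucc ω]
        _ ≤ ∫⁻ ω, ENNReal.ofReal (‖S m ω‖ ^ p) ∂P
            + ENNReal.ofReal (bahrEsseenConst p)
              * ∫⁻ ω, ENNReal.ofReal (‖X (m + 1) ω‖ ^ p) ∂P := hstep
        _ ≤ (∫⁻ ω, ENNReal.ofReal (‖X 1 ω‖ ^ p) ∂P
              + ENNReal.ofReal (bahrEsseenConst p) *
                ∑ j ∈ Finset.Icc 2 m, ∫⁻ ω, ENNReal.ofReal (‖X j ω‖ ^ p) ∂P)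
            + ENNReal.ofReal (bahrEsseenConst p)
              * ∫⁻ ω, ENNReal.ofReal (‖X (m + 1) ω‖ ^ p) ∂P :=
            add_le_add_left (ih hmn') _
        _ = ∫⁻ ω, ENNReal.ofReal (‖X 1 ω‖ ^ p) ∂P
            + ENNReal.ofReal (bahrEsseenConst p) *
              ∑ j ∈ Finset.Icc 2 (m + 1), ∫⁻ ω, ENNReal.ofReal (‖X j ω‖ ^ p) ∂P := by
            rw [Finset.sum_Icc_succ_top (by omega : 2 ≤ m + 1), mul_add, add_assoc]
  exact main n hn (le_refl n)
end
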